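/- Lower bound for arbitrary encoders: Let $T_{P^+}$ have singular values $1 = s_0 \ge s_1 \ge \cdots$ with $\epsilon \in (1-s_1, 1 - \sqrt{(s_1^2+s_2^2)/2})$. For any $d$-dimensional encoder $\Phi: \mathcal{X} \to \mathbb{R}^d$ with components in $L^2(P_\mathcal{X})$, there exists a zero-mean unit-norm $f \in L^2(P_\mathcal{X})$ with compatibility $\rho(f, P^+) = 1 - \epsilon$ such that $\min_{w, b} \|w^\top \Phi + b - f\|^2_{P_\mathcal{X}} \ge \frac{s_1^2 - (1-\epsilon)^2}{s_1^2 - s_{d+1}^2}$. -/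

import Mathlib

open scoped InnerProductSpace

/-- A `d × (d+1)` homogeneous system has a unit-norm solution. -/
lemma stmt8_aux_ker (d : ℕ) (A : Fin d → Fin (d+1) → ℝ) :
    ∃ x : Fin (d+1) → ℝ, (∑ j, x j ^ 2 = 1) ∧ ∀ i, ∑ j, A i j * x j = 0 := by
  have hL : ∃ x : Fin (d+1) → ℝ, x ≠ 0 ∧ ∀ i, ∑ j, A i j * x j = 0 := by
    let L : (Fin (d+1) → ℝ) →ₗ[ℝ] (Fin d → ℝ) :=
      { toFun := fun x i => ∑ j, A i j * x j
        map_add' := by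
          intro x y; funext i; simp [mul_add, Finset.sum_add_distrib]
        map_smul' := by
          intro c x; funext i; simp [Finset.mul_sum]; ring_nf
          exact Finset.sum_congr rfl fun j _ => by ring }
    have hninj : ¬ Function.Injective L := by
      intro hinj
      have h1 := LinearMap.finrank_le_finrank_of_injective hinj
      simp [Module.finrank_pi] at h1
    rw [← LinearMap.ker_eq_bot] at hninj
    obtain ⟨x, hx, hx0⟩ := Submodule.exists_mem_ne_zero_of_ne_bot hninj
    refine ⟨x, hx0, fun i => ?_⟩
    have := LinearMap.mem_ker.mp hx
    exact congrFun this i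
  obtain ⟨x, hx0, hxA⟩ := hL
  set r : ℝ := Real.sqrt (∑ j, x j ^ 2) with hr
  have hsum : 0 < ∑ j, x j ^ 2 := by
    rcases Function.ne_iff.mp hx0 with ⟨j, hj⟩
    calc 0 < x j ^ 2 := by
          have := sub_ne_zero.mpr hj; simp at this ⊢; exact pow_ne_zero 2 hj |> fun h => lt_of_le_of_ne (sq_nonneg _) (Ne.symm h)
    _ ≤ ∑ j, x j ^ 2 := Finset.single_le_sum (fun j _ => sq_nonneg (x j)) (Finset.mem_univ j)
  have hrpos : 0 < r := Real.sqrt_pos.mpr hsum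
  refine ⟨fun j => x j / r, ?_, fun i => ?_⟩
  · have : ∑ j, (x j / r) ^ 2 = (∑ j, x j ^ 2) / r ^ 2 := by
      rw [Finset.sum_div]; exact Finset.sum_congr rfl fun j _ => by ring
    rw [this, Real.sq_sqrt hsum.le, div_self hsum.ne']
  · have : ∑ j, A i j * (x j / r) = (∑ j, A i j * x j) / r := by
      rw [Finset.sum_div]; exact Finset.sum_congr rfl fun j _ => by ring
    rw [this, hxA i, zero_div]


set_option maxHeartbeats 1000000 in
/-- Lower bound for arbitrary encoders. With singular values
`1 = s_0 ≥ s_1 ≥ ⋯` and `ε ∈ (1 - s_1, 1 - √((s_1² + s_2²)/2))`, for any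
`d`-dimensional encoder `Φ` there exists a zero-mean unit-norm `f` with
compatibility `ρ(f, P⁺) = 1 - ε` such that
`min_{w,b} ‖wᵀΦ + b - f‖² ≥ (s_1² - (1-ε)²)/(s_1² - s_{d+1}²)`. -/
theorem stmt8 {H : Type*} [NormedAddCommGroup H] [InnerProductSpace ℝ H]
    [CompleteSpace H]
    (μ : ℕ → H) (hμ : Orthonormal ℝ μ)
    (hμbasis : ∀ f : H, HasSum (fun i => ⟪μ i, f⟫_ℝ • μ i) f)
    (s : ℕ → ℝ) (hs0 : s 0 = 1) (hs : ∀ i, 0 ≤ s i) (hmono : Antitone s)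
    (d : ℕ) (hd : 0 < d) (ε : ℝ)
    (hε1 : 1 - s 1 < ε) (hε2 : ε < 1 - Real.sqrt (((s 1) ^ 2 + (s 2) ^ 2) / 2))
    (Φ : Fin d → H) :
    ∃ f : H, ⟪μ 0, f⟫_ℝ = 0 ∧ ‖f‖ = 1 ∧
      -- compatibility ρ(f, P⁺) = 1 - ε
      (∑' i, (s (i + 1)) ^ 2 * ⟪μ (i + 1), f⟫_ℝ ^ 2) = (1 - ε) ^ 2 ∧
      ((s 1) ^ 2 - (1 - ε) ^ 2) / ((s 1) ^ 2 - (s (d + 1)) ^ 2) ≤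
        ⨅ w : Fin d → ℝ, ⨅ b : ℝ, ‖(∑ i, w i • Φ i) + b • μ 0 - f‖ ^ 2 := by
  have hite : ∀ i j, ⟪μ i, μ j⟫_ℝ = if i = j then 1 else 0 := orthonormal_iff_ite.mp hμ
  -- basic numeric facts
  have hsqrt_nonneg : (0:ℝ) ≤ Real.sqrt (((s 1) ^ 2 + (s 2) ^ 2) / 2) := Real.sqrt_nonneg _
  have hε0 : 0 < 1 - ε := by linarith
  have havg : ((s 1) ^ 2 + (s 2) ^ 2) / 2 < (1 - ε) ^ 2 :=
    (Real.sqrt_lt' hε0).mp (by linarith)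
  have hs1pos : 0 < s 1 := by linarith
  have h1 : (1 - ε) ^ 2 < (s 1) ^ 2 :=
    pow_lt_pow_left₀ (by linarith) hε0.le (by norm_num)
  have hs21 : (s 2) ^ 2 ≤ (s 1) ^ 2 := pow_le_pow_left₀ (hs 2) (hmono (by norm_num)) 2
  have hs2lt : (s 2) ^ 2 < (1 - ε) ^ 2 := by linarith
  -- step 1 : kernel vector
  obtain ⟨x, hxnorm, hxA⟩ := stmt8_aux_ker d (fun i j => ⟪Φ i, μ ((j : ℕ) + 1)⟫_ℝ)
  -- key inner product computations
  have key : ∀ (y : Fin (d+1) → ℝ) (k : ℕ),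
      ⟪μ k, ∑ j : Fin (d+1), y j • μ ((j : ℕ) + 1)⟫_ℝ
        = ∑ j : Fin (d+1), (if k = (j : ℕ) + 1 then y j else 0) := by
    intro y k
    rw [inner_sum]
    exact Finset.sum_congr rfl fun j _ => by
      rw [real_inner_smul_right, hite]
      by_cases h : k = (j : ℕ) + 1 <;> simp [h]
  have key2 : ∀ (y y' : Fin (d+1) → ℝ),
      ⟪∑ j : Fin (d+1), y j • μ ((j : ℕ) + 1), ∑ j : Fin (d+1), y' j • μ ((j : ℕ) + 1)⟫_ℝ
        = ∑ j : Fin (d+1), y j * y' j := by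
    intro y y'
    rw [sum_inner]
    refine Finset.sum_congr rfl fun j _ => ?_
    rw [real_inner_smul_left, key]
    congr 1
    rw [Finset.sum_eq_single j]
    · simp
    · intro j' _ hj'
      rw [if_neg]
      intro h
      exact hj' (Fin.ext (by omega))
    · intro h; exact absurd (Finset.mem_univ j) h
  -- the vector g
  set g : H := ∑ j : Fin (d+1), x j • μ ((j : ℕ) + 1) with hgdef
  have hg_inner : ⟪g, g⟫_ℝ = 1 := by
    rw [hgdef, key2]
    simpa [pow_two] using hxnorm
  have hgΦ : ∀ i, ⟪Φ i, g⟫_ℝ = 0 := by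
    intro i
    rw [hgdef, inner_sum, ← hxA i]
    exact Finset.sum_congr rfl fun j _ => by rw [real_inner_smul_right]; ring
  have hgμ0 : ⟪μ 0, g⟫_ℝ = 0 := by
    rw [hgdef, key]
    exact Finset.sum_eq_zero fun j _ => by simp
  -- coefficients of z
  set a : ℝ := x 0 with hadef
  set x' : Fin (d+1) → ℝ := fun j => if j = 0 then 0 else x j with hx'def
  have hx'sum : ∑ j, x' j ^ 2 = 1 - a ^ 2 := by
    have h0 : ∑ j, (x j ^ 2 - x' j ^ 2) = a ^ 2 := by
      rw [Finset.sum_eq_single 0]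
      · simp [hx'def, hadef]
      · intro j _ hj; simp [hx'def, hj]
      · simp
    rw [Finset.sum_sub_distrib, hxnorm] at h0
    linarith
  obtain ⟨t, ht0, htnorm, hβ⟩ : ∃ t : Fin (d+1) → ℝ, t 0 = 0 ∧ (∑ j, t j ^ 2 = 1) ∧
      a ^ 2 + (∑ j, x j * t j) ^ 2 = 1 := by
    set e1 : Fin (d+1) := ⟨1, by omega⟩ with he1
    have he10 : e1 ≠ 0 := by
      intro h
      have := congrArg Fin.val h
      simp [he1] at this
    by_cases hr0 : ∑ j, x' j ^ 2 = 0
    · have hall : ∀ j, x' j = 0 := by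
        intro j
        have := (Finset.sum_eq_zero_iff_of_nonneg (fun j _ => sq_nonneg (x' j))).mp hr0
          j (Finset.mem_univ j)
        exact pow_eq_zero_iff (by norm_num) |>.mp this
      refine ⟨fun j => if j = e1 then 1 else 0, ?_, ?_, ?_⟩
      · show (if (0 : Fin (d+1)) = e1 then (1:ℝ) else 0) = 0
        rw [if_neg (Ne.symm he10)]
      · rw [Finset.sum_eq_single e1]
        · simp
        · intro j _ hj; simp [hj]
        · simp
      · have hβ0 : ∑ j, x j * (if j = e1 then (1:ℝ) else 0) = x e1 := by
          rw [Finset.sum_eq_single e1]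
          · simp
          · intro j _ hj; simp [hj]
          · simp
        have hxe1 : x e1 = 0 := by
          have h := hall e1
          rw [hx'def] at h
          simpa [he10] using h
        rw [hβ0, hxe1]
        have : a ^ 2 = 1 := by rw [hx'sum] at hr0; linarith
        simpa using this
    · have hrpos : 0 < ∑ j, x' j ^ 2 :=
        lt_of_le_of_ne (Finset.sum_nonneg fun j _ => sq_nonneg _) (Ne.symm hr0)
      set r : ℝ := Real.sqrt (∑ j, x' j ^ 2) with hrdef
      have hrpos' : 0 < r := Real.sqrt_pos.mpr hrpos
      have hrsq : r ^ 2 = ∑ j, x' j ^ 2 := Real.sq_sqrt hrpos.le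
      refine ⟨fun j => x' j / r, ?_, ?_, ?_⟩
      · rw [hx'def]; simp
      · have : ∑ j, (x' j / r) ^ 2 = (∑ j, x' j ^ 2) / r ^ 2 := by
          rw [Finset.sum_div]; exact Finset.sum_congr rfl fun j _ => by ring
        rw [this, hrsq, div_self hrpos.ne']
      · have hxx' : ∀ j, x j * x' j = x' j ^ 2 := by
          intro j
          by_cases hj : j = 0 <;> simp [hx'def, hj, pow_two]
        have : ∑ j, x j * (x' j / r) = (∑ j, x' j ^ 2) / r := by
          rw [Finset.sum_div]
          exact Finset.sum_congr rfl fun j _ => by rw [← hxx' j]; ring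
        rw [this, ← hrsq]
        have : r ^ 2 / r = r := by
          rw [pow_two, mul_div_assoc, div_self hrpos'.ne', mul_one]
        rw [this]
        rw [hrsq, hx'sum]
        ring
  set β : ℝ := ∑ j, x j * t j with hβdef
  -- the constant c
  set c : ℝ := ∑ j : Fin (d+1), s ((j : ℕ) + 1) ^ 2 * t j ^ 2 with hcdef
  have hc_lb : s (d+1) ^ 2 ≤ c := by
    calc s (d+1) ^ 2 = ∑ j : Fin (d+1), s (d+1) ^ 2 * t j ^ 2 := by
          rw [← Finset.mul_sum, htnorm, mul_one]
      _ ≤ c := Finset.sum_le_sum fun j _ =>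
          mul_le_mul_of_nonneg_right
            (pow_le_pow_left₀ (hs _) (hmono (by omega : (j : ℕ) + 1 ≤ d + 1)) 2)
            (sq_nonneg _)
  have hc_ub : c ≤ s 2 ^ 2 := by
    calc c ≤ ∑ j : Fin (d+1), s 2 ^ 2 * t j ^ 2 := by
          refine Finset.sum_le_sum fun j _ => ?_
          by_cases hj : j = 0
          · simp [hj, ht0]
          · refine mul_le_mul_of_nonneg_right
              (pow_le_pow_left₀ (hs _) (hmono ?_) 2) (sq_nonneg _)
            have : (j : ℕ) ≠ 0 := fun h => hj (Fin.ext h)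
            omega
      _ = s 2 ^ 2 := by rw [← Finset.mul_sum, htnorm, mul_one]
  have hc_lt : c < (1 - ε) ^ 2 := lt_of_le_of_lt hc_ub hs2lt
  have hden : 0 < s 1 ^ 2 - c := by linarith
  set Y : ℝ := (s 1 ^ 2 - (1 - ε) ^ 2) / (s 1 ^ 2 - c) with hYdef
  have hY0 : 0 < Y := div_pos (by linarith) hden
  have hY2 : Y ≤ 1 / 2 := by
    rw [hYdef, div_le_iff₀ hden]
    linarith
  have hYmul : Y * (s 1 ^ 2 - c) = s 1 ^ 2 - (1 - ε) ^ 2 := div_mul_cancel₀ _ hden.ne'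
  set cθ : ℝ := Real.sqrt (1 - Y) with hcθdef
  set sθ : ℝ := Real.sqrt Y with hsθdef
  have hcθ : cθ ^ 2 = 1 - Y := Real.sq_sqrt (by linarith)
  have hsθ : sθ ^ 2 = Y := Real.sq_sqrt hY0.le
  have hcθ0 : 0 ≤ cθ := Real.sqrt_nonneg _
  have hsθ0 : 0 ≤ sθ := Real.sqrt_nonneg _
  set σ1 : ℝ := if 0 ≤ a then 1 else -1 with hσ1def
  set σ2 : ℝ := if 0 ≤ β then 1 else -1 with hσ2def
  have hσ1 : σ1 * a = |a| := by
    rw [hσ1def]; by_cases h : 0 ≤ a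
    · rw [if_pos h, abs_of_nonneg h, one_mul]
    · rw [if_neg h, abs_of_neg (lt_of_not_ge h)]; ring
  have hσ2 : σ2 * β = |β| := by
    rw [hσ2def]; by_cases h : 0 ≤ β
    · rw [if_pos h, abs_of_nonneg h, one_mul]
    · rw [if_neg h, abs_of_neg (lt_of_not_ge h)]; ring
  have hσ1sq : σ1 ^ 2 = 1 := by rw [hσ1def]; by_cases h : 0 ≤ a <;> simp [h]
  have hσ2sq : σ2 ^ 2 = 1 := by rw [hσ2def]; by_cases h : 0 ≤ β <;> simp [h]
  -- the function f
  set u : Fin (d+1) → ℝ := fun j => (if j = 0 then σ1 * cθ else 0) + σ2 * sθ * t j with hudef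
  have hu0 : u 0 = σ1 * cθ := by rw [hudef]; simp [ht0]
  have hu : ∀ j : Fin (d+1), j ≠ 0 → u j = σ2 * sθ * t j := by
    intro j hj; rw [hudef]; simp [hj]
  set f : H := ∑ j : Fin (d+1), u j • μ ((j : ℕ) + 1) with hfdef
  -- inner products with f
  have hf0 : ⟪μ 0, f⟫_ℝ = 0 := by
    rw [hfdef, key]
    exact Finset.sum_eq_zero fun j _ => by simp
  have husq : ∀ j : Fin (d+1), s ((j : ℕ) + 1) ^ 2 * u j ^ 2
      = (if j = 0 then s 1 ^ 2 * cθ ^ 2 else 0) + sθ ^ 2 * (s ((j : ℕ) + 1) ^ 2 * t j ^ 2) := by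
    intro j
    by_cases hj : j = 0
    · subst hj
      rw [hu0, ht0, if_pos rfl]
      have hv0 : ((0 : Fin (d+1)) : ℕ) = 0 := rfl
      rw [hv0]
      linear_combination (s 1 ^ 2 * cθ ^ 2) * hσ1sq
    · rw [hu j hj, if_neg hj]
      linear_combination (s ((j : ℕ) + 1) ^ 2 * sθ ^ 2 * t j ^ 2) * hσ2sq
  have hsum_main : ∑ j : Fin (d+1), s ((j : ℕ) + 1) ^ 2 * u j ^ 2 = (1 - ε) ^ 2 := by
    rw [Finset.sum_congr rfl fun j _ => husq j, Finset.sum_add_distrib]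
    rw [Finset.sum_ite_eq' Finset.univ (0 : Fin (d+1)) (fun _ => s 1 ^ 2 * cθ ^ 2)]
    rw [if_pos (Finset.mem_univ _), ← Finset.mul_sum, ← hcdef, hcθ, hsθ]
    linear_combination (-1 : ℝ) * hYmul
  have hinner_f : ∀ k : ℕ, ⟪μ (k + 1), f⟫_ℝ = if h : k < d + 1 then u ⟨k, h⟩ else 0 := by
    intro k
    rw [hfdef, key]
    by_cases h : k < d + 1
    · rw [dif_pos h, Finset.sum_eq_single (⟨k, h⟩ : Fin (d+1))]
      · simp
      · intro j _ hj
        rw [if_neg]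
        intro hk
        apply hj
        apply Fin.ext
        simp only [Fin.val_mk]
        omega
      · intro h'; exact absurd (Finset.mem_univ _) h'
    · rw [dif_neg h]
      exact Finset.sum_eq_zero fun j _ => if_neg (by have := j.isLt; omega)
  have htsum : (∑' k, s (k + 1) ^ 2 * ⟪μ (k + 1), f⟫_ℝ ^ 2) = (1 - ε) ^ 2 := by
    rw [tsum_eq_sum (s := Finset.range (d+1))
      (by intro k hk
          rw [hinner_f, dif_neg (by simpa using hk)]
          simp)]
    rw [← Fin.sum_univ_eq_sum_range (fun k => s (k + 1) ^ 2 * ⟪μ (k + 1), f⟫_ℝ ^ 2) (d+1)]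
    rw [← hsum_main]
    refine Finset.sum_congr rfl fun j _ => ?_
    rw [hinner_f, dif_pos j.isLt]
  -- norm of f
  have hff : ⟪f, f⟫_ℝ = 1 := by
    rw [hfdef, key2]
    have : ∀ j : Fin (d+1), u j * u j = (if j = 0 then cθ ^ 2 else 0) + sθ ^ 2 * t j ^ 2 := by
      intro j
      by_cases hj : j = 0
      · subst hj
        rw [hu0, ht0, if_pos rfl]
        linear_combination cθ ^ 2 * hσ1sq
      · rw [hu j hj, if_neg hj]
        linear_combination (sθ ^ 2 * t j ^ 2) * hσ2sq
    rw [Finset.sum_congr rfl fun j _ => this j, Finset.sum_add_distrib]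
    rw [Finset.sum_ite_eq' Finset.univ (0 : Fin (d+1)) (fun _ => cθ ^ 2)]
    rw [if_pos (Finset.mem_univ _), ← Finset.mul_sum, htnorm, mul_one, hcθ, hsθ]
    ring
  have hfnorm : ‖f‖ = 1 := by
    have h2 : ‖f‖ ^ 2 = 1 := by rw [← real_inner_self_eq_norm_sq]; exact hff
    have h3 : (‖f‖ - 1) * (‖f‖ + 1) = 0 := by linear_combination h2
    rcases mul_eq_zero.mp h3 with h | h
    · linarith
    · have := norm_nonneg f; linarith
  have hgnorm : ‖g‖ = 1 := by
    have h2 : ‖g‖ ^ 2 = 1 := by rw [← real_inner_self_eq_norm_sq]; exact hg_inner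
    have h3 : (‖g‖ - 1) * (‖g‖ + 1) = 0 := by linear_combination h2
    rcases mul_eq_zero.mp h3 with h | h
    · linarith
    · have := norm_nonneg g; linarith
  -- the inner product ⟪g, f⟫
  have hgf : ⟪g, f⟫_ℝ = cθ * |a| + sθ * |β| := by
    rw [hgdef, hfdef, key2]
    have : ∀ j : Fin (d+1), x j * u j
        = (if j = 0 then a * (σ1 * cθ) else 0) + σ2 * sθ * (x j * t j) := by
      intro j
      by_cases hj : j = 0
      · subst hj; rw [hu0, ht0, if_pos rfl, hadef]; ring
      · rw [hu j hj, if_neg hj]; ring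
    rw [Finset.sum_congr rfl fun j _ => this j, Finset.sum_add_distrib]
    rw [Finset.sum_ite_eq' Finset.univ (0 : Fin (d+1)) (fun _ => a * (σ1 * cθ))]
    rw [if_pos (Finset.mem_univ _), ← Finset.mul_sum, ← hβdef]
    linear_combination cθ * hσ1 + sθ * hσ2
  -- lower bound on ⟪g, f⟫²
  have hR : ((s 1) ^ 2 - (1 - ε) ^ 2) / ((s 1) ^ 2 - (s (d + 1)) ^ 2) ≤ ⟪g, f⟫_ℝ ^ 2 := by
    have hRY : ((s 1) ^ 2 - (1 - ε) ^ 2) / ((s 1) ^ 2 - (s (d + 1)) ^ 2) ≤ Y := by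
      rw [hYdef]
      exact div_le_div_of_nonneg_left (by linarith) hden (by linarith)
    have hgf2 : Y ≤ ⟪g, f⟫_ℝ ^ 2 := by
      rw [hgf]
      have hexp : cθ ^ 2 * a ^ 2 + sθ ^ 2 * β ^ 2 ≤ (cθ * |a| + sθ * |β|) ^ 2 := by
        have e1 : (cθ * |a| + sθ * |β|) ^ 2
            = cθ ^ 2 * a ^ 2 + sθ ^ 2 * β ^ 2 + 2 * (cθ * |a|) * (sθ * |β|) := by
          linear_combination cθ ^ 2 * (sq_abs a) + sθ ^ 2 * (sq_abs β)
        have e2 : 0 ≤ 2 * (cθ * |a|) * (sθ * |β|) := by positivity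
        linarith
      have hmin : Y * (a ^ 2 + β ^ 2) ≤ cθ ^ 2 * a ^ 2 + sθ ^ 2 * β ^ 2 := by
        rw [hcθ, hsθ]
        have h4 : 0 ≤ (1 - 2 * Y) * a ^ 2 := mul_nonneg (by linarith) (sq_nonneg a)
        linarith [h4]
      rw [hβ] at hmin
      linarith
    linarith
  -- conclusion
  refine ⟨f, hf0, hfnorm, htsum, ?_⟩
  refine le_ciInf fun w => le_ciInf fun b' => ?_
  set v : H := (∑ i, w i • Φ i) + b' • μ 0 - f with hvdef
  have hv : ⟪g, v⟫_ℝ = -⟪g, f⟫_ℝ := by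
    have hgμ0' : ⟪g, μ 0⟫_ℝ = 0 := by rw [real_inner_comm]; exact hgμ0
    rw [hvdef, inner_sub_right, inner_add_right, inner_sum, real_inner_smul_right]
    rw [hgμ0']
    have : ∀ i ∈ Finset.univ, ⟪g, w i • Φ i⟫_ℝ = 0 := by
      intro i _
      rw [real_inner_smul_right, real_inner_comm, hgΦ i, mul_zero]
    rw [Finset.sum_congr rfl this, Finset.sum_const_zero]
    ring
  have habs : |⟪g, v⟫_ℝ| ≤ ‖v‖ := by
    have := abs_real_inner_le_norm g v
    rwa [hgnorm, one_mul] at this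
  have hsq : ⟪g, v⟫_ℝ ^ 2 ≤ ‖v‖ ^ 2 := by
    have := pow_le_pow_left₀ (abs_nonneg _) habs 2
    rwa [sq_abs] at this
  calc ((s 1) ^ 2 - (1 - ε) ^ 2) / ((s 1) ^ 2 - (s (d + 1)) ^ 2)
      ≤ ⟪g, f⟫_ℝ ^ 2 := hR
    _ = ⟪g, v⟫_ℝ ^ 2 := by rw [hv]; ring
    _ ≤ ‖v‖ ^ 2 := hsq
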